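/- Let C be a k-dimensional linear code of length n over F_3, let h be the dimension of the hull H(C) = C ∩ C^⊥, and let ζ = e^{2πi/3} ∈ ℂ be a primitive third root of unity. Then the complex modulus of Σ_{c ∈ C} ζ^{wt(c)} equals (√3)^{k+h}, where wt(c) is the Hamming weight of c. -/

import Mathlib

/-- The Euclidean dual of a linear code `C ⊆ F^n`. -/
def dualCode {F : Type*} [Field F] {n : ℕ} (C : Submodule F (Fin n → F)) :
    Submodule F (Fin n → F) where
  carrier := {x | ∀ c ∈ C, ∑ i, x i * c i = 0}
  add_mem' := by
    intro x y hx hy c hc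
    simp [add_mul, Finset.sum_add_distrib, hx c hc, hy c hc]
  zero_mem' := by
    intro c hc
    simp
  smul_mem' := by
    intro a x hx c hc
    simp [smul_eq_mul, mul_assoc, ← Finset.mul_sum, hx c hc]

namespace TernaryWeightAux

noncomputable def zz : ℂ := Complex.exp (2 * Real.pi * Complex.I / 3)

lemma zz_prim : IsPrimitiveRoot zz 3 := by
  have := Complex.isPrimitiveRoot_exp 3 (by norm_num)
  convert this using 2
  simp [zz]

lemma zz_pow3 : zz ^ 3 = 1 := zz_prim.pow_eq_one

lemma zz_ne_one : zz ≠ 1 := zz_prim.ne_one (by norm_num)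

lemma zz_sq_ne_one : zz ^ 2 ≠ 1 :=
  zz_prim.pow_ne_one_of_pos_of_lt (by norm_num) (by norm_num)

lemma zz_ne_zero : zz ≠ 0 := Complex.exp_ne_zero _

lemma zz_abs : ‖zz‖ = 1 := by
  rw [zz, Complex.norm_exp]
  norm_num [Complex.div_re]

lemma zz_conj : (starRingEnd ℂ) zz = zz ^ 2 := by
  have h1 : (starRingEnd ℂ) zz * zz = 1 := by
    rw [mul_comm, Complex.mul_conj]
    norm_cast
    rw [← Complex.sq_norm, zz_abs]; norm_num
  have h2 : zz ^ 2 * zz = 1 := by rw [← pow_succ, zz_pow3]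
  exact mul_right_cancel₀ zz_ne_zero (h1.trans h2.symm)

noncomputable def chi (t : ZMod 3) : ℂ := zz ^ t.val

lemma zz_pow_mod (m : ℕ) : zz ^ m = zz ^ (m % 3) := by
  conv_lhs => rw [← Nat.div_add_mod m 3]
  rw [pow_add, pow_mul, zz_pow3, one_pow, one_mul]

lemma chi_add (a b : ZMod 3) : chi (a + b) = chi a * chi b := by
  rw [chi, chi, chi, ← pow_add, ZMod.val_add, ← zz_pow_mod]

lemma chi_zero : chi 0 = 1 := by simp [chi]

lemma chi_conj (t : ZMod 3) : (starRingEnd ℂ) (chi t) = chi (2 * t) := by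
  rw [chi, chi, map_pow, zz_conj, ← pow_mul, ZMod.val_mul, ← zz_pow_mod]
  norm_num [ZMod.val]
  rfl

lemma chi_ne_one {a : ZMod 3} (ha : a ≠ 0) : chi a ≠ 1 := by
  have hv : a.val = 1 ∨ a.val = 2 := by
    have h1 : a.val < 3 := a.val_lt
    have h2 : a.val ≠ 0 := by simpa [ZMod.val_eq_zero] using ha
    omega
  rcases hv with hv | hv <;> rw [chi, hv]
  · simpa using zz_ne_one
  · exact zz_sq_ne_one

lemma sq_zmod3 (x : ZMod 3) : x * x = if x = 0 then 0 else 1 := by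
  revert x; decide

lemma sum_sq_eq_norm {n : ℕ} (c : Fin n → ZMod 3) :
    ∑ i, c i * c i = (hammingNorm c : ZMod 3) := by
  classical
  rw [hammingNorm]
  simp only [sq_zmod3]
  rw [Finset.sum_ite, Finset.sum_const, Finset.sum_const]
  simp [Finset.filter_not, Finset.filter_ne']

lemma zz_pow_norm {n : ℕ} (c : Fin n → ZMod 3) :
    zz ^ hammingNorm c = chi (∑ i, c i * c i) := by
  rw [sum_sq_eq_norm, chi, ZMod.val_natCast, ← zz_pow_mod]

variable {n : ℕ} (C : Submodule (ZMod 3) (Fin n → ZMod 3)) [Fintype C]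

lemma T_mem {d : Fin n → ZMod 3} (hd : d ∈ dualCode C) :
    ∑ c : C, chi (2 * ∑ i, (c : Fin n → ZMod 3) i * d i) = (Fintype.card C : ℂ) := by
  have : ∀ c : C, chi (2 * ∑ i, (c : Fin n → ZMod 3) i * d i) = 1 := by
    intro c
    have h0 : ∑ i, d i * (c : Fin n → ZMod 3) i = 0 := hd _ c.2
    rw [show (∑ i, (c : Fin n → ZMod 3) i * d i) = ∑ i, d i * (c : Fin n → ZMod 3) i by
      exact Finset.sum_congr rfl fun i _ => mul_comm _ _, h0, mul_zero, chi_zero]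
  rw [Finset.sum_congr rfl fun c _ => this c, Finset.sum_const]
  simp

lemma T_not_mem {d : Fin n → ZMod 3} (hd : d ∉ dualCode C) :
    ∑ c : C, chi (2 * ∑ i, (c : Fin n → ZMod 3) i * d i) = 0 := by
  have : ∃ c₀ ∈ C, ∑ i, d i * c₀ i ≠ 0 := by
    by_contra hcon
    push_neg at hcon
    exact hd hcon
  obtain ⟨c₀, hc₀, hne⟩ := this
  set T := ∑ c : C, chi (2 * ∑ i, (c : Fin n → ZMod 3) i * d i) with hT
  have key : chi (2 * ∑ i, c₀ i * d i) * T = T := by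
    rw [hT, Finset.mul_sum,
      ← Equiv.sum_comp (Equiv.addLeft (⟨c₀, hc₀⟩ : C))
        (fun c : C => chi (2 * ∑ i, (c : Fin n → ZMod 3) i * d i))]
    refine Finset.sum_congr rfl fun c _ => ?_
    rw [← chi_add]
    congr 1
    simp only [Equiv.coe_addLeft, Submodule.coe_add]
    rw [Finset.mul_sum, Finset.mul_sum, Finset.mul_sum, ← Finset.sum_add_distrib]
    refine Finset.sum_congr rfl fun i _ => ?_
    simp only [Pi.add_apply]
    ring
  have hne1 : chi (2 * ∑ i, c₀ i * d i) ≠ 1 := by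
    apply chi_ne_one
    have h2 : (2 : ZMod 3) ≠ 0 := by decide
    intro hcon
    apply hne
    rw [show (∑ i, d i * c₀ i) = ∑ i, c₀ i * d i from
      Finset.sum_congr rfl fun i _ => mul_comm _ _]
    rcases mul_eq_zero.mp hcon with h | h
    · exact absurd h h2
    · exact h
  by_contra hT0
  exact hne1 (mul_right_cancel₀ hT0 (key.trans (one_mul T).symm))

end TernaryWeightAux

open TernaryWeightAux in
/-- For a ternary `[n, k]` code `C` with hull of dimension `h`, and
`ζ = e^{2πi/3}` a primitive third root of unity, the modulus of the
evaluation `W_C(1, ζ) = Σ_{c ∈ C} ζ^{wt(c)}` of the weight enumerator equals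
`(√3)^{k+h}`. -/
theorem abs_weight_enumerator_ternary_eval_root_of_unity {n k h : ℕ}
    (C : Submodule (ZMod 3) (Fin n → ZMod 3)) [Fintype C]
    (hk : Module.finrank (ZMod 3) C = k)
    (hh : Module.finrank (ZMod 3) ↥(C ⊓ dualCode C) = h) :
    ‖(∑ c : C,
          Complex.exp (2 * Real.pi * Complex.I / 3) ^
            hammingNorm (c : Fin n → ZMod 3))‖ =
      Real.sqrt 3 ^ (k + h) := by
  classical
  set S : ℂ := ∑ c : C, Complex.exp (2 * Real.pi * Complex.I / 3) ^
      hammingNorm (c : Fin n → ZMod 3) with hSdef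
  have hS' : S = ∑ c : C,
      chi (∑ i, (c : Fin n → ZMod 3) i * (c : Fin n → ZMod 3) i) :=
    Finset.sum_congr rfl fun c _ => zz_pow_norm _
  have hconj : (starRingEnd ℂ) S = ∑ c : C,
      chi (2 * ∑ i, (c : Fin n → ZMod 3) i * (c : Fin n → ZMod 3) i) := by
    rw [hS', map_sum]
    exact Finset.sum_congr rfl fun c _ => chi_conj _
  -- Fintype instance on the hull
  haveI : Fintype ↥(C ⊓ dualCode C) := Fintype.ofFinite _
  have hcardC : (Fintype.card C : ℂ) = (3 : ℂ) ^ k := by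
    rw [Module.card_eq_pow_finrank (K := ZMod 3) (V := C), ZMod.card, hk]
    push_cast; ring
  have hcardH : (Fintype.card ↥(C ⊓ dualCode C) : ℂ) = (3 : ℂ) ^ h := by
    rw [Module.card_eq_pow_finrank (K := ZMod 3) (V := ↥(C ⊓ dualCode C)), ZMod.card, hh]
    push_cast; ring
  have hmain : S * (starRingEnd ℂ) S = (3 : ℂ) ^ (k + h) := by
    rw [hconj, hS', Finset.sum_mul_sum]
    -- swap: outer variable c' (the conjugated one)
    rw [Finset.sum_comm]
    -- inner reindex c ↦ c' + e
    have step1 : ∀ c' : C,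
        (∑ c : C, chi (∑ i, (c : Fin n → ZMod 3) i * (c : Fin n → ZMod 3) i) *
          chi (2 * ∑ i, (c' : Fin n → ZMod 3) i * (c' : Fin n → ZMod 3) i)) =
        ∑ e : C, chi (∑ i, (e : Fin n → ZMod 3) i * (e : Fin n → ZMod 3) i) *
          chi (2 * ∑ i, (c' : Fin n → ZMod 3) i * (e : Fin n → ZMod 3) i) := by
      intro c'
      rw [← Equiv.sum_comp (Equiv.addLeft c')
        (fun c : C => chi (∑ i, (c : Fin n → ZMod 3) i * (c : Fin n → ZMod 3) i) *
          chi (2 * ∑ i, (c' : Fin n → ZMod 3) i * (c' : Fin n → ZMod 3) i))]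
      refine Finset.sum_congr rfl fun e _ => ?_
      rw [← chi_add, ← chi_add]
      congr 1
      simp only [Equiv.coe_addLeft, Submodule.coe_add]
      rw [Finset.mul_sum, Finset.mul_sum, ← Finset.sum_add_distrib, ← Finset.sum_add_distrib]
      refine Finset.sum_congr rfl fun i _ => ?_
      simp only [Pi.add_apply]
      have hx : ∀ x y : ZMod 3, (x + y) * (x + y) + 2 * (x * x) = y * y + 2 * (x * y) := by
        decide
      exact hx _ _
    rw [Finset.sum_congr rfl fun c' _ => step1 c']
    rw [Finset.sum_comm]
    have step2 : ∀ e : C,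
        (∑ c' : C, chi (∑ i, (e : Fin n → ZMod 3) i * (e : Fin n → ZMod 3) i) *
          chi (2 * ∑ i, (c' : Fin n → ZMod 3) i * (e : Fin n → ZMod 3) i)) =
        if (e : Fin n → ZMod 3) ∈ dualCode C then (Fintype.card C : ℂ) else 0 := by
      intro e
      rw [← Finset.mul_sum]
      by_cases hmem : (e : Fin n → ZMod 3) ∈ dualCode C
      · rw [if_pos hmem, T_mem C hmem]
        have hq : (∑ i, (e : Fin n → ZMod 3) i * (e : Fin n → ZMod 3) i) = 0 := by
          rw [show (∑ i, (e : Fin n → ZMod 3) i * (e : Fin n → ZMod 3) i)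
              = ∑ i, (e : Fin n → ZMod 3) i * (e : Fin n → ZMod 3) i from rfl]
          exact hmem _ e.2
        rw [hq, chi_zero, one_mul]
      · rw [if_neg hmem, T_not_mem C hmem, mul_zero]
    rw [Finset.sum_congr rfl fun e _ => step2 e]
    rw [Finset.sum_ite, Finset.sum_const_zero, add_zero, Finset.sum_const, nsmul_eq_mul]
    have hequiv : {e : C // (e : Fin n → ZMod 3) ∈ dualCode C} ≃ ↥(C ⊓ dualCode C) :=
      { toFun := fun e => ⟨e.1.1, Submodule.mem_inf.mpr ⟨e.1.2, e.2⟩⟩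
        invFun := fun x => ⟨⟨x.1, (Submodule.mem_inf.mp x.2).1⟩, (Submodule.mem_inf.mp x.2).2⟩
        left_inv := fun _ => rfl
        right_inv := fun _ => rfl }
    have hcardfil : (Finset.univ.filter
        (fun e : C => (e : Fin n → ZMod 3) ∈ dualCode C)).card
        = Fintype.card ↥(C ⊓ dualCode C) := by
      rw [← Fintype.card_subtype]
      exact Fintype.card_congr hequiv
    rw [hcardfil, hcardH, hcardC, ← pow_add, add_comm h k]
  have habs2 : (Complex.normSq S : ℂ) = ((3 : ℝ) ^ (k + h) : ℝ) := by
    rw [← Complex.mul_conj, hmain]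
    push_cast; ring
  have habs2' : Complex.normSq S = (3 : ℝ) ^ (k + h) := by
    exact_mod_cast habs2
  rw [Complex.norm_def, habs2']
  induction (k + h) with
  | zero => simp
  | succ m ih => rw [pow_succ, pow_succ, ← ih, ← Real.sqrt_mul (by positivity)]
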